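/- Let n ≥ 1, let k : Fin n → ℂ, and let A_k be the multiplication operator on EuclideanSpace ℂ (Fin n) defined by (A_k x) p = (k p) · (x p). Let Ω = {p : Fin n | ‖1 - k p‖ < 1} and let P be the coordinate projection (P x) p = x p if p ∈ Ω and (P x) p = 0 otherwise. Let i* ∈ EuclideanSpace ℂ (Fin n), J* = A_k(i*), and let (Xⁿ) be the reverse-filtering iteration X⁰ = J*, X^{n+1} = Xⁿ + J* - A_k(Xⁿ). Then (i) the projected sequence satisfies the same recursion: P(X^{n+1}) = P(Xⁿ) + P(J*) - A_k(P(Xⁿ)) for all n, and (ii) the projected sequence converges to the projected true input: P(Xⁿ) → P(i*). (The fixed-point iteration splits into independent subsequences on Ω and its complement, and the Ω-component converges to the unique solution.) -/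

import Mathlib

/-- The multiplication (Fourier-multiplier) operator with multiplier `k`. -/
def mulOp (n : ℕ) (k : Fin n → ℂ) (x : EuclideanSpace ℂ (Fin n)) :
    EuclideanSpace ℂ (Fin n) :=
  WithLp.toLp 2 (fun p => k p * x p)

/-- The coordinate projection onto `Ω = {p | ‖1 - k p‖ < 1}`. -/
noncomputable def projOmega (n : ℕ) (k : Fin n → ℂ) (x : EuclideanSpace ℂ (Fin n)) :
    EuclideanSpace ℂ (Fin n) :=
  WithLp.toLp 2 (fun p => if ‖(1 : ℂ) - k p‖ < 1 then x p else 0)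

/-- The reverse-filtering iteration splits: the `Ω`-projected sequence obeys
the same recursion and converges to the projection of the true input. -/
theorem multiplier_operator_projected_iteration
    (n : ℕ) (hn : 0 < n) (k : Fin n → ℂ)
    (istar Jstar : EuclideanSpace ℂ (Fin n)) (hJ : Jstar = mulOp n k istar)
    (X : ℕ → EuclideanSpace ℂ (Fin n)) (hX0 : X 0 = Jstar)
    (hX : ∀ m : ℕ, X (m + 1) = X m + Jstar - mulOp n k (X m)) :
    (∀ m : ℕ, projOmega n k (X (m + 1)) =
        projOmega n k (X m) + projOmega n k Jstar - mulOp n k (projOmega n k (X m))) ∧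
      Filter.Tendsto (fun m => projOmega n k (X m)) Filter.atTop
        (nhds (projOmega n k istar)) := by
  have key : ∀ m p, X m p = (1 - (1 - k p) ^ (m + 1)) * istar p := by
    intro m
    induction m with
    | zero =>
      intro p
      rw [hX0, hJ]
      show k p * istar p = _
      ring
    | succ m ih =>
      intro p
      have : X (m + 1) p = X m p + Jstar p - k p * X m p := by
        rw [hX m]
        simp [mulOp, PiLp.sub_apply, PiLp.add_apply]
      rw [this, ih p, hJ]
      show _ + k p * istar p - _ = _
      ring
  constructor
  · intro m
    ext p
    simp only [projOmega, mulOp, PiLp.sub_apply, PiLp.add_apply]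
    split
    · rw [hX m]
      simp [mulOp, PiLp.sub_apply, PiLp.add_apply]
    · simp
  · rw [show nhds (projOmega n k istar) = nhds (projOmega n k istar) from rfl]
    refine ((PiLp.continuous_toLp 2 (fun _ : Fin n => ℂ)).tendsto _).comp
      (f := fun m => (projOmega n k (X m)).ofLp) ?_
    apply tendsto_pi_nhds.2
    intro p
    simp only [projOmega]
    split
    case isTrue h =>
      have hpow : Filter.Tendsto (fun m : ℕ => (1 - k p) ^ (m + 1)) Filter.atTop (nhds 0) := by
        exact (tendsto_pow_atTop_nhds_zero_of_norm_lt_one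
          (by simpa using h)).comp (Filter.tendsto_add_atTop_nat 1)
      have : Filter.Tendsto (fun m : ℕ => (1 - (1 - k p) ^ (m + 1)) * istar p)
          Filter.atTop (nhds ((1 - 0) * istar p)) :=
        ((tendsto_const_nhds.sub hpow).mul tendsto_const_nhds)
      simp only [sub_zero, one_mul] at this
      convert this using 2 with m
      exact key m p
    · exact tendsto_const_nhds
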